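/- Every left commutative AG*-groupoid is a CA-AG-groupoid; that is, if a magma S satisfies the left invertive law, the AG* identity (a·b)·c = b·(a·c), and left commutativity (a·b)·c = (b·a)·c for all a,b,c, then S satisfies cyclic associativity a·(b·c) = c·(a·b) for all a,b,c. -/
import Mathlib


theorem left_commutative_AG_star_is_CA {S : Type*} [Mul S]
    (li : ∀ a b c : S, (a * b) * c = (c * b) * a)
    (ags : ∀ a b c : S, (a * b) * c = b * (a * c))
    (lc : ∀ a b c : S, (a * b) * c = (b * a) * c) :
    ∀ a b c : S, a * (b * c) = c * (a * b) := by
  intro a b c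
  rw [← ags b a c, li b a c, lc c a b, ags a c b]
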